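/- Define the twisted convolutions (f ⋆_{α,u} g)(x) = ∫_G f(y) * α_y(g(y⁻¹x)) * u(y, y⁻¹x) dμ(y) and (f ⋆_{β,v} g)(x) = ∫_G f(y) * β_y(g(y⁻¹x)) * v(y, y⁻¹x) dμ(y) (Bochner integrals in A), and for f : G → A set f_w(x) := f(x) * w_x. If for a given x ∈ G the integrand y ↦ f(y) * β_y(g(y⁻¹x)) * v(y, y⁻¹x) is Bochner integrable, then (f ⋆_{β,v} g)_w(x) = (f_w ⋆_{α,u} g_w)(x). Hence the map f ↦ f_w intertwines the two twisted convolution products, so the twisted crossed products A⋊_{α,u}G and A⋊_{β,v}G defined by exterior equivalent twisted actions are isomorphic. -/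

import Mathlib

open MeasureTheory

/-- Let `G` be a locally compact group with left Haar measure `μ`, `A` a
unital C*-algebra, `(α, u)` a twisted action, `w : G → U(A)`, `β_x := Ad(w_x) ∘ α_x` and
`v(x,y) := w_x α_x(w_y) u(x,y) w_{xy}*`.  If for a given `x` the integrand
`y ↦ f(y) β_y(g(y⁻¹x)) v(y,y⁻¹x)` is Bochner integrable, then
`(f ⋆_{β,v} g)_w(x) = (f_w ⋆_{α,u} g_w)(x)` where `f_w(x) = f(x) w_x`; hence `f ↦ f_w`
intertwines the two twisted convolutions, so exterior equivalent twisted actions have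
isomorphic twisted crossed products. -/
theorem exterior_equivalent_twisted_convolutions
    {G : Type*} [Group G] [TopologicalSpace G] [IsTopologicalGroup G]
    [LocallyCompactSpace G] [MeasurableSpace G] [BorelSpace G]
    (μ : Measure G) [μ.IsHaarMeasure]
    {A : Type*} [NormedRing A] [StarRing A] [CStarRing A] [NormedAlgebra ℂ A]
    [CompleteSpace A] [StarModule ℂ A]
    (α : G → (A ≃⋆ₐ[ℂ] A)) (u : G → G → unitary A)
    (hu : ∀ x y (a : A), α x (α y a) = (u x y : A) * α (x * y) a * star ((u x y : A)))
    (w : G → unitary A)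
    (β : G → A → A)
    (hβ : ∀ x (a : A), β x a = (w x : A) * α x a * star ((w x : A)))
    (v : G → G → A)
    (hv : ∀ x y, v x y
      = (w x : A) * α x ((w y : A)) * (u x y : A) * star ((w (x * y) : A)))
    (f g : G → A) (x : G)
    (hint : Integrable (fun y => f y * β y (g (y⁻¹ * x)) * v y (y⁻¹ * x)) μ) :
    (∫ y, f y * β y (g (y⁻¹ * x)) * v y (y⁻¹ * x) ∂μ) * (w x : A)
      = ∫ y, (f y * (w y : A)) * α y (g (y⁻¹ * x) * (w (y⁻¹ * x) : A))
          * (u y (y⁻¹ * x) : A) ∂μ := by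
  have hcomm := ((ContinuousLinearMap.mul ℂ A).flip ((w x : A))).integral_comp_comm hint
  simp only [ContinuousLinearMap.flip_apply, ContinuousLinearMap.mul_apply'] at hcomm
  rw [← hcomm]
  refine integral_congr_ae (Filter.Eventually.of_forall fun y => ?_)
  have hx : y * (y⁻¹ * x) = x := by group
  simp only [hβ, hv, hx, map_mul]
  have c1 : ∀ t : A, star ((w y : A)) * ((w y : A) * t) = t := fun t => by
    rw [← mul_assoc]; simpa using congrArg (· * t) ((w y).prop.1 : star (w y) * w y = 1)
  have c2 : ∀ t : A, star ((w x : A)) * ((w x : A) * t) = t := fun t => by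
    rw [← mul_assoc]; simpa using congrArg (· * t) ((w x).prop.1 : star (w x) * w x = 1)
  have c2' : star ((w x : A)) * ((w x : A)) = 1 := by
    simpa using ((w x).prop.1 : star (w x) * w x = 1)
  simp only [mul_assoc, c1, c2, c2', mul_one]
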